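/- Multivariate Stein's lemma: Let Z be a random vector in ℝ^d whose law is the multivariate Gaussian distribution with mean 0 and positive definite covariance matrix Σ. Let h : ℝ^d → ℝ be differentiable with every partial derivative ∂h/∂z_l integrable with respect to the law of Z, and with z ↦ z_k·h(z) integrable for every k. Then for every k ∈ {1,…,d}, E[Z_k·h(Z)] = Σ_{l=1}^d Σ[k,l]·E[(∂h/∂z_l)(Z)]; equivalently, E[∇h(Z)] = Σ^{-1}·E[Z·h(Z)]. -/

import Mathlib

open MeasureTheory ProbabilityTheory Real Matrix

/-- The density of the multivariate Gaussian distribution on `ℝ^d` with mean `0` and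
(positive definite) covariance matrix `S`. -/
noncomputable def mvGaussianPDF {d : ℕ} (S : Matrix (Fin d) (Fin d) ℝ) (z : Fin d → ℝ) : ℝ :=
  (Real.sqrt ((2 * π) ^ d * S.det))⁻¹ * Real.exp (-(z ⬝ᵥ S⁻¹.mulVec z) / 2)

/-- The multivariate Gaussian measure on `ℝ^d` with mean `0` and covariance matrix `S`. -/
noncomputable def mvGaussian {d : ℕ} (S : Matrix (Fin d) (Fin d) ℝ) :
    Measure (Fin d → ℝ) :=
  volume.withDensity (fun z => ENNReal.ofReal (mvGaussianPDF S z))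

section SteinAux
open Set

lemma integral_deriv_eq_zero_of_integrable (f f' : ℝ → ℝ)
    (hd : ∀ t, HasDerivAt f (f' t) t) (hi : Integrable f) (hi' : Integrable f') :
    ∫ t, f' t = 0 := by
  have h1 : Filter.Tendsto f Filter.atTop (nhds 0) :=
    tendsto_zero_of_hasDerivAt_of_integrableOn_Ioi (a := 0) (fun x _ => hd x)
      hi'.integrableOn hi.integrableOn
  have h2 : Filter.Tendsto f Filter.atBot (nhds 0) :=
    tendsto_zero_of_hasDerivAt_of_integrableOn_Iic (a := 0) (fun x _ => hd x)
      hi'.integrableOn hi.integrableOn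
  have e1 : ∫ x in Ioi (0:ℝ), f' x = 0 - f 0 :=
    integral_Ioi_of_hasDerivAt_of_tendsto (hd 0).continuousAt.continuousWithinAt
      (fun x _ => hd x) hi'.integrableOn h1
  have e2 : ∫ x in Iic (0:ℝ), f' x = f 0 - 0 :=
    integral_Iic_of_hasDerivAt_of_tendsto (hd 0).continuousAt.continuousWithinAt
      (fun x _ => hd x) hi'.integrableOn h2
  rw [← intervalIntegral.integral_Iic_add_Ioi hi'.integrableOn hi'.integrableOn, e1, e2]
  ring

section core
variable {d : ℕ}

/-- The splitting measurable equivalence at coordinate `l`. -/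
noncomputable def splitAt (l : Fin d) :
    (Fin d → ℝ) ≃ᵐ (ℝ × ({j : Fin d // ¬ j = l} → ℝ)) :=
  (MeasurableEquiv.piEquivPiSubtypeProd (fun _ : Fin d => ℝ) (fun j => j = l)).trans
    ((MeasurableEquiv.funUnique {j : Fin d // j = l} ℝ).prodCongr (MeasurableEquiv.refl _))

lemma splitAt_measurePreserving (l : Fin d) :
    MeasurePreserving (splitAt l) volume volume := by
  have h1 := MeasureTheory.volume_preserving_piEquivPiSubtypeProd
    (fun _ : Fin d => ℝ) (fun j => j = l)
  have h2 : MeasurePreserving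
      (Prod.map (MeasurableEquiv.funUnique {j : Fin d // j = l} ℝ)
        (id : ({j : Fin d // ¬ j = l} → ℝ) → _)) volume volume :=
    (MeasureTheory.volume_preserving_funUnique _ _).prod (MeasurePreserving.id _)
  have hfin : (Subtype.fintype fun j : Fin d => j = l) = Fintype.subtypeEq l :=
    Subsingleton.elim _ _
  rw [hfin] at h1
  exact h2.comp h1

lemma splitAt_symm_apply (l : Fin d) (t : ℝ) (y : {j : Fin d // ¬ j = l} → ℝ) :
    (splitAt l).symm (t, y) = fun j => if h : j = l then t else y ⟨j, h⟩ := by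
  funext j
  simp [splitAt, MeasurableEquiv.piEquivPiSubtypeProd, MeasurableEquiv.prodCongr,
    MeasurableEquiv.funUnique, MeasurableEquiv.trans, Equiv.piEquivPiSubtypeProd,
    MeasurableEquiv.refl]

end core

section core2
variable {d : ℕ}

lemma splitAt_symm_affine (l : Fin d) (y : {j : Fin d // ¬ j = l} → ℝ) :
    (fun t : ℝ => (splitAt l).symm (t, y))
      = fun t : ℝ => (splitAt l).symm (0, y) + t • (Pi.single l 1 : Fin d → ℝ) := by
  funext t j
  rcases eq_or_ne j l with rfl | hj
  · simp [splitAt_symm_apply]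
  · simp [splitAt_symm_apply, hj, Pi.single_eq_of_ne hj]

lemma splitAt_symm_fst (l : Fin d) (y : {j : Fin d // ¬ j = l} → ℝ) (t : ℝ) :
    (splitAt l).symm (t, y) l = t := by simp [splitAt_symm_apply]

lemma integral_fderiv_single_eq_zero (F : (Fin d → ℝ) → ℝ) (l : Fin d)
    (hF : Differentiable ℝ F)
    (h1 : Integrable (fun z => z l * F z))
    (h2 : Integrable (fun z => fderiv ℝ F z (Pi.single l 1))) :
    ∫ z, fderiv ℝ F z (Pi.single l 1) = 0 := by
  set G := fun z => fderiv ℝ F z (Pi.single l 1) with hGdef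
  have mp : MeasurePreserving (splitAt l).symm volume volume :=
    MeasurePreserving.symm _ (splitAt_measurePreserving l)
  have hemb := (splitAt (d := d) l).symm.measurableEmbedding
  have hGc : Integrable (fun w => G ((splitAt l).symm w)) (volume.prod volume) :=
    (mp.integrable_comp_emb hemb).2 h2
  have h1c : Integrable
      (fun w => ((splitAt l).symm w) l * F ((splitAt l).symm w)) (volume.prod volume) :=
    (mp.integrable_comp_emb hemb).2 h1
  rw [← mp.integral_comp hemb G,
    show (volume : Measure (ℝ × ({ j : Fin d // ¬ j = l } → ℝ))) = (volume.prod volume) from rfl,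
    MeasureTheory.integral_prod_symm _ hGc]
  have hae : ∀ᵐ y : ({j : Fin d // ¬ j = l} → ℝ) ∂volume,
      (∫ t : ℝ, G ((splitAt l).symm (t, y))) = 0 := by
    filter_upwards [h1c.prod_left_ae, hGc.prod_left_ae] with y hy1 hy2
    set w : ℝ → (Fin d → ℝ) := fun t => (splitAt l).symm (t, y) with hwdef
    have haff := splitAt_symm_affine l y
    have hcw : Continuous w := by
      rw [hwdef, haff]
      exact continuous_const.add (continuous_id.smul continuous_const)
    have hd : ∀ t, HasDerivAt (fun s => F (w s)) (G (w t)) t := by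
      intro t
      have h0 : HasDerivAt w (Pi.single l 1) t := by
        rw [hwdef, haff]
        simpa using ((hasDerivAt_id t).smul_const (Pi.single l (1:ℝ))).const_add
          ((splitAt l).symm (0, y))
      exact (hF (w t)).hasFDerivAt.comp_hasDerivAt t h0
    have hwl : ∀ t, w t l = t := fun t => splitAt_symm_fst l y t
    have h1' : Integrable (fun t => t * F (w t)) := by
      have : (fun t : ℝ => t * F (w t)) = fun t => w t l * F (w t) := by
        funext t; rw [hwl]
      rw [this]; exact hy1
    have hmeas : AEStronglyMeasurable (fun t => F (w t)) (volume : Measure ℝ) :=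
      (hF.continuous.comp hcw).aestronglyMeasurable
    have hIic : IntegrableOn (fun t => F (w t)) (Iic (-1)) := by
      refine Integrable.mono h1'.integrableOn hmeas.restrict ?_
      rw [ae_restrict_iff' measurableSet_Iic]
      filter_upwards with t ht
      have h1t : 1 ≤ |t| := le_abs.2 (Or.inr (by have := mem_Iic.1 ht; linarith))
      calc ‖F (w t)‖ = 1 * ‖F (w t)‖ := (one_mul _).symm
        _ ≤ |t| * ‖F (w t)‖ := by
            exact mul_le_mul_of_nonneg_right h1t (norm_nonneg _)
        _ = ‖t * F (w t)‖ := by simp [Real.norm_eq_abs, abs_mul]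
    have hIoi : IntegrableOn (fun t => F (w t)) (Ioi 1) := by
      refine Integrable.mono h1'.integrableOn hmeas.restrict ?_
      rw [ae_restrict_iff' measurableSet_Ioi]
      filter_upwards with t ht
      have h1t : 1 ≤ |t| := le_abs.2 (Or.inl (le_of_lt ht))
      calc ‖F (w t)‖ = 1 * ‖F (w t)‖ := (one_mul _).symm
        _ ≤ |t| * ‖F (w t)‖ := mul_le_mul_of_nonneg_right h1t (norm_nonneg _)
        _ = ‖t * F (w t)‖ := by simp [Real.norm_eq_abs, abs_mul]
    have hIcc : IntegrableOn (fun t => F (w t)) (Icc (-1) 1) :=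
      (hF.continuous.comp hcw).integrableOn_Icc
    have hgint : Integrable (fun t => F (w t)) := by
      rw [← integrableOn_univ]
      have hset : (Iic (-1) ∪ (Icc (-1) 1 ∪ Ioi 1)) = (univ : Set ℝ) := by
        rw [← union_assoc, Set.Iic_union_Icc_eq_Iic (by norm_num), Set.Iic_union_Ioi]
      rw [← hset]
      exact hIic.union (hIcc.union hIoi)
    exact integral_deriv_eq_zero_of_integrable _ _ hd hgint hy2
  rw [integral_congr_ae hae, integral_zero]

end core2

section pdf
open Matrix Real
variable {d : ℕ}

noncomputable def quadGrad (A : Matrix (Fin d) (Fin d) ℝ) (z : Fin d → ℝ) :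
    (Fin d → ℝ) →L[ℝ] ℝ :=
  ∑ i : Fin d, ∑ j : Fin d, A i j •
    (z i • (ContinuousLinearMap.proj j : (Fin d → ℝ) →L[ℝ] ℝ)
      + z j • (ContinuousLinearMap.proj i : (Fin d → ℝ) →L[ℝ] ℝ))

lemma hasFDerivAt_quad (A : Matrix (Fin d) (Fin d) ℝ) (z : Fin d → ℝ) :
    HasFDerivAt (fun z : Fin d → ℝ => z ⬝ᵥ A.mulVec z) (quadGrad A z) z := by
  have hrw : (fun z : Fin d → ℝ => z ⬝ᵥ A.mulVec z)
      = fun z => ∑ i : Fin d, ∑ j : Fin d, A i j * (z i * z j) := by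
    funext z
    simp only [dotProduct, Matrix.mulVec, Finset.mul_sum]
    exact Finset.sum_congr rfl fun i _ => Finset.sum_congr rfl fun j _ => by ring
  rw [hrw]
  exact HasFDerivAt.fun_sum fun i _ => HasFDerivAt.fun_sum fun j _ =>
    ((hasFDerivAt_apply i z).fun_mul (hasFDerivAt_apply j z)).const_mul _

lemma quadGrad_apply_single (A : Matrix (Fin d) (Fin d) ℝ)
    (hA : ∀ i j, A i j = A j i) (z : Fin d → ℝ) (l : Fin d) :
    quadGrad A z (Pi.single l 1) = 2 * A.mulVec z l := by
  simp only [quadGrad, ContinuousLinearMap.coe_sum', Finset.sum_apply,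
    ContinuousLinearMap.add_apply, ContinuousLinearMap.coe_smul', Pi.smul_apply,
    ContinuousLinearMap.proj_apply, smul_eq_mul]
  have key : ∀ i j : Fin d,
      A i j * (z i * (Pi.single l 1 : Fin d → ℝ) j + z j * (Pi.single l 1 : Fin d → ℝ) i)
        = (if j = l then A i j * z i else 0) + (if i = l then A i j * z j else 0) := by
    intro i j
    simp only [Pi.single_apply]
    split_ifs <;> ring
  rw [Finset.sum_congr rfl fun i _ => Finset.sum_congr rfl fun j _ => key i j]
  simp only [Finset.sum_add_distrib, Finset.sum_ite_eq', Finset.mem_univ, if_true]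
  have h2 : ∀ i : Fin d, (∑ j : Fin d, if i = l then A i j * z j else 0)
      = if i = l then ∑ j : Fin d, A i j * z j else 0 := by
    intro i; split_ifs <;> simp
  rw [Finset.sum_congr rfl fun i _ => h2 i,
    Finset.sum_ite_eq' Finset.univ l (fun i => ∑ j : Fin d, A i j * z j)]
  simp only [Finset.mem_univ, if_true, Matrix.mulVec, dotProduct]
  rw [Finset.sum_congr rfl fun i (_ : i ∈ Finset.univ) => by rw [hA i l]]
  ring

end pdf

section pdf2
open Matrix Real
variable {d : ℕ} (S : Matrix (Fin d) (Fin d) ℝ)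

lemma mvGaussianPDF_nonneg (z : Fin d → ℝ) : 0 ≤ mvGaussianPDF S z := by
  unfold mvGaussianPDF; positivity

lemma mvGaussianPDF_hasFDerivAt (z : Fin d → ℝ) :
    HasFDerivAt (mvGaussianPDF S)
      (mvGaussianPDF S z • ((-(1:ℝ)/2) • quadGrad S⁻¹ z)) z := by
  have h1 : HasFDerivAt (fun z : Fin d → ℝ => -(z ⬝ᵥ S⁻¹.mulVec z) / 2)
      ((-(1:ℝ)/2) • quadGrad S⁻¹ z) z := by
    have hrw : (fun z : Fin d → ℝ => -(z ⬝ᵥ S⁻¹.mulVec z) / 2)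
        = fun z => (-(1:ℝ)/2) * (z ⬝ᵥ S⁻¹.mulVec z) := by funext z; ring
    rw [hrw]
    exact (hasFDerivAt_quad S⁻¹ z).const_mul _
  have h3 := (h1.exp).const_mul ((Real.sqrt ((2 * π) ^ d * S.det))⁻¹)
  refine h3.congr_fderiv ?_
  simp [mvGaussianPDF, smul_smul, mul_assoc]

lemma mvGaussianPDF_differentiable : Differentiable ℝ (mvGaussianPDF S) :=
  fun z => (mvGaussianPDF_hasFDerivAt S z).differentiableAt

lemma mvGaussianPDF_continuous : Continuous (mvGaussianPDF S) :=
  (mvGaussianPDF_differentiable S).continuous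

lemma fderiv_mvGaussianPDF_single (hsym : ∀ i j, S⁻¹ i j = S⁻¹ j i) (z : Fin d → ℝ) (l : Fin d) :
    fderiv ℝ (mvGaussianPDF S) z (Pi.single l 1)
      = -(S⁻¹.mulVec z l) * mvGaussianPDF S z := by
  rw [(mvGaussianPDF_hasFDerivAt S z).fderiv]
  simp only [ContinuousLinearMap.smul_apply, quadGrad_apply_single S⁻¹ hsym z l, smul_eq_mul]
  ring

lemma integrable_mvGaussian_iff (f : (Fin d → ℝ) → ℝ) :
    Integrable f (mvGaussian S) ↔ Integrable (fun z => f z * mvGaussianPDF S z) volume := by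
  rw [mvGaussian, integrable_withDensity_iff
    ((mvGaussianPDF_continuous S).measurable.ennreal_ofReal)
    (Filter.Eventually.of_forall fun _ => ENNReal.ofReal_lt_top)]
  have hrw : (fun z => f z * (ENNReal.ofReal (mvGaussianPDF S z)).toReal)
      = fun z => f z * mvGaussianPDF S z := by
    funext z; rw [ENNReal.toReal_ofReal (mvGaussianPDF_nonneg S z)]
  rw [hrw]

lemma integral_mvGaussian (f : (Fin d → ℝ) → ℝ) :
    ∫ z, f z ∂(mvGaussian S) = ∫ z, f z * mvGaussianPDF S z := by
  have hid : (fun z => ENNReal.ofReal (mvGaussianPDF S z))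
      = fun z => ((Real.toNNReal (mvGaussianPDF S z) : NNReal) : ENNReal) := rfl
  rw [mvGaussian, hid, integral_withDensity_eq_integral_smul
      (show Measurable fun z : Fin d → ℝ => Real.toNNReal (mvGaussianPDF S z) from
        measurable_real_toNNReal.comp (mvGaussianPDF_continuous S).measurable) f]
  congr 1; funext z
  simp [NNReal.smul_def, Real.coe_toNNReal _ (mvGaussianPDF_nonneg S z), mul_comm]

end pdf2

end SteinAux

/-- Multivariate Stein's lemma: if `Z ∼ N(0, S)` with `S` positive definite and
`h : ℝ^d → ℝ` is differentiable with every partial derivative integrable and every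
`z ↦ z k * h z` integrable, then `E[Z_k h(Z)] = ∑ l, S[k,l] E[∂h/∂z_l (Z)]`, or
equivalently `E[∇h(Z)] = S⁻¹ E[Z h(Z)]`. -/
theorem multivariate_stein_lemma {d : ℕ}
    (S : Matrix (Fin d) (Fin d) ℝ) (hS : S.PosDef)
    (h : (Fin d → ℝ) → ℝ) (hdiff : Differentiable ℝ h)
    (hint : ∀ l : Fin d, Integrable (fun z => fderiv ℝ h z (Pi.single l 1)) (mvGaussian S))
    (hzh : ∀ k : Fin d, Integrable (fun z => z k * h z) (mvGaussian S)) :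
    (∀ k : Fin d,
        ∫ z, z k * h z ∂(mvGaussian S)
          = ∑ l : Fin d, S k l * ∫ z, fderiv ℝ h z (Pi.single l 1) ∂(mvGaussian S)) ∧
    (∀ l : Fin d,
        ∫ z, fderiv ℝ h z (Pi.single l 1) ∂(mvGaussian S)
          = ∑ k : Fin d, S⁻¹ l k * ∫ z, z k * h z ∂(mvGaussian S)) := by
  have hsym : ∀ i j, S⁻¹ i j = S⁻¹ j i := by
    intro i j
    have := (hS.1.inv).apply i j
    simpa using this.symm
  set p := mvGaussianPDF S with hp
  set H : (Fin d → ℝ) → ℝ := fun z => h z * p z with hH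
  have hHdiff : Differentiable ℝ H := hdiff.mul (mvGaussianPDF_differentiable S)
  have hfderivH : ∀ (z : Fin d → ℝ) (l : Fin d), fderiv ℝ H z (Pi.single l 1)
      = fderiv ℝ h z (Pi.single l 1) * p z - S⁻¹.mulVec z l * H z := by
    intro z l
    have hm := (hdiff z).hasFDerivAt.fun_mul (mvGaussianPDF_hasFDerivAt S z)
    rw [hH, hm.fderiv]
    simp only [ContinuousLinearMap.add_apply, ContinuousLinearMap.smul_apply,
      quadGrad_apply_single S⁻¹ hsym z l, smul_eq_mul]
    ring
  have hint' : ∀ l : Fin d, Integrable (fun z => fderiv ℝ h z (Pi.single l 1) * p z) volume :=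
    fun l => (integrable_mvGaussian_iff S _).1 (hint l)
  have hzh' : ∀ k : Fin d, Integrable (fun z => (z k * h z) * p z) volume :=
    fun k => (integrable_mvGaussian_iff S _).1 (hzh k)
  have hzH : ∀ k : Fin d, Integrable (fun z => z k * H z) volume := by
    intro k
    have := hzh' k
    simp only [mul_assoc] at this
    exact this
  have hmulVec : ∀ l : Fin d, (fun z : Fin d → ℝ => S⁻¹.mulVec z l * H z)
      = fun z => ∑ k : Fin d, S⁻¹ l k * (z k * H z) := by
    intro l; funext z
    simp only [Matrix.mulVec, dotProduct, Finset.sum_mul, mul_assoc]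
  have hAzH : ∀ l : Fin d, Integrable (fun z => S⁻¹.mulVec z l * H z) volume := by
    intro l
    rw [hmulVec l]
    exact integrable_finset_sum _ fun k _ => (hzH k).const_mul _
  have hfH : ∀ l : Fin d, Integrable (fun z => fderiv ℝ H z (Pi.single l 1)) volume := by
    intro l
    rw [show (fun z => fderiv ℝ H z (Pi.single l 1))
      = fun z => fderiv ℝ h z (Pi.single l 1) * p z - S⁻¹.mulVec z l * H z
      from funext fun z => hfderivH z l]
    exact (hint' l).sub (hAzH l)
  have key : ∀ l : Fin d, ∫ z, fderiv ℝ h z (Pi.single l 1) ∂(mvGaussian S)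
      = ∑ k : Fin d, S⁻¹ l k * ∫ z, z k * h z ∂(mvGaussian S) := by
    intro l
    have hzero := integral_fderiv_single_eq_zero H l hHdiff (hzH l) (hfH l)
    have hsplit : ∫ z, fderiv ℝ H z (Pi.single l 1)
        = (∫ z, fderiv ℝ h z (Pi.single l 1) * p z) - ∫ z, S⁻¹.mulVec z l * H z := by
      rw [show (fun z => fderiv ℝ H z (Pi.single l 1))
        = fun z => fderiv ℝ h z (Pi.single l 1) * p z - S⁻¹.mulVec z l * H z
        from funext fun z => hfderivH z l]
      exact integral_sub (hint' l) (hAzH l)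
    have e1 : ∫ z, fderiv ℝ h z (Pi.single l 1) * p z = ∫ z, S⁻¹.mulVec z l * H z := by
      rw [hzero] at hsplit
      linarith [hsplit]
    have e2 : ∫ z, S⁻¹.mulVec z l * H z
        = ∑ k : Fin d, S⁻¹ l k * ∫ z, z k * H z := by
      rw [hmulVec l, integral_finset_sum _ fun k _ => (hzH k).const_mul _]
      exact Finset.sum_congr rfl fun k _ => MeasureTheory.integral_const_mul _ _
    rw [integral_mvGaussian S _, e1, e2]
    refine Finset.sum_congr rfl fun k _ => ?_
    rw [integral_mvGaussian S _]
    congr 1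
    apply integral_congr_ae
    filter_upwards with z
    rw [hH]; ring
  refine ⟨?_, key⟩
  intro k
  have hSAone : S * S⁻¹ = 1 := Matrix.mul_nonsing_inv S hS.det_pos.ne'.isUnit
  set I : Fin d → ℝ := fun k => ∫ z, z k * h z ∂(mvGaussian S) with hI
  have : ∑ l : Fin d, S k l * ∑ k' : Fin d, S⁻¹ l k' * I k' = I k := by
    simp_rw [Finset.mul_sum, ← mul_assoc]
    rw [Finset.sum_comm]
    have hss : ∀ k' : Fin d, ∑ l : Fin d, S k l * S⁻¹ l k' * I k'
        = (if k = k' then 1 else 0) * I k' := by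
      intro k'
      rw [← Finset.sum_mul]
      congr 1
      rw [← Matrix.mul_apply, hSAone, Matrix.one_apply]
    rw [Finset.sum_congr rfl fun k' _ => hss k']
    simp [Finset.sum_ite_eq]
  rw [show (∑ l : Fin d, S k l * ∫ z, fderiv ℝ h z (Pi.single l 1) ∂(mvGaussian S))
    = ∑ l : Fin d, S k l * ∑ k' : Fin d, S⁻¹ l k' * I k'
    from Finset.sum_congr rfl fun l _ => by rw [key l]]
  exact this.symm
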